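/- Let n ≥ 2k ≥ 4 and 4 ≤ b ≤ k+1. The number of k-subsets S = {s_1 < ... < s_k} of [n] with s_1 = 1 and s_j ≤ j + 1 for all 2 ≤ j ≤ b−1 (i.e., S ⪯ {1} ∪ [3,b]) equals (b−1)·C(n−b, k−b+1) + C(n−b, k−b). -/

import Mathlib

/-- The `i`-th smallest element (0-indexed) of a finite set of naturals. -/
def nth (A : Finset ℕ) (i : ℕ) : ℕ := (Finset.sort A (· ≤ ·)).getD i 0

lemma sorted_getD_le_iff : ∀ (l : List ℕ), l.Pairwise (· ≤ ·) → ∀ j, j < l.length → ∀ m : ℕ,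
    (l.getD j 0 ≤ m ↔ j < l.countP (· ≤ m)) := by
  intro l
  induction l with
  | nil => intro _ j hj; simp at hj
  | cons a t ih =>
    intro hs j hj m
    rw [List.pairwise_cons] at hs
    cases j with
    | zero =>
      simp only [List.getD_cons_zero, List.countP_cons]
      constructor
      · intro h; simp [h]
      · intro h
        by_contra hc
        push_neg at hc
        have h1 : t.countP (fun x => decide (x ≤ m)) = 0 := by
          rw [List.countP_eq_zero]
          intro x hx
          have := hs.1 x hx
          simp; omega
        simp [h1, show ¬ (a ≤ m) by omega] at h
    | succ j =>
      simp only [List.getD_cons_succ, List.countP_cons]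
      have hjt : j < t.length := by simpa using hj
      constructor
      · intro h
        have hmem : t.getD j 0 ∈ t := by
          rw [List.getD_eq_getElem _ _ hjt]; exact List.getElem_mem _
        have ham : a ≤ m := le_trans (hs.1 _ hmem) h
        rw [ih hs.2 j hjt m] at h
        simp [ham]; omega
      · intro h
        rw [ih hs.2 j hjt m]
        have hd : (if decide (a ≤ m) = true then 1 else 0) ≤ 1 := by split <;> omega
        omega

lemma nth_mem (S : Finset ℕ) (j : ℕ) (hj : j < S.card) : nth S j ∈ S := by
  have hl : j < (Finset.sort S (· ≤ ·)).length := by rwa [Finset.length_sort]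
  rw [← Finset.mem_sort (α := ℕ) (· ≤ ·), nth, List.getD_eq_getElem _ _ hl]
  exact List.getElem_mem _

lemma filter_card_eq_countP (S : Finset ℕ) (m : ℕ) :
    (S.filter (· ≤ m)).card = (Finset.sort S (· ≤ ·)).countP (· ≤ m) := by
  have h1 : (S.filter (· ≤ m)).card = Multiset.countP (fun x => decide (x ≤ m)) S.val := by
    rw [Multiset.countP_eq_card_filter]
    simp [Finset.card, Finset.filter]
  rw [h1, ← Finset.sort_eq S (· ≤ ·), Multiset.coe_countP]
  simp

lemma nth_le_iff (S : Finset ℕ) (j : ℕ) (hj : j < S.card) (m : ℕ) :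
    nth S j ≤ m ↔ j < (S.filter (· ≤ m)).card := by
  rw [filter_card_eq_countP]
  exact sorted_getD_le_iff _ (Finset.pairwise_sort S _) j (by rwa [Finset.length_sort]) m

lemma filter_eq_inter (S : Finset ℕ) (n m : ℕ) (hS : S ⊆ Finset.Icc 1 n) :
    S.filter (· ≤ m) = S ∩ Finset.Icc 1 m := by
  ext x
  simp only [Finset.mem_filter, Finset.mem_inter, Finset.mem_Icc]
  constructor
  · rintro ⟨hx, h⟩
    exact ⟨hx, (Finset.mem_Icc.mp (hS hx)).1, h⟩
  · rintro ⟨hx, _, h⟩; exact ⟨hx, h⟩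

lemma equiv_cond (n k b : ℕ) (hk : 2 ≤ k) (hb : 4 ≤ b) (hbk : b ≤ k + 1)
    (S : Finset ℕ) (hS : S ⊆ Finset.Icc 1 n) (hcard : S.card = k) :
    ((nth S 0 = 1 ∧ ∀ j < b - 1, 1 ≤ j → nth S j ≤ j + 2)
      ↔ (1 ∈ S ∧ b - 1 ≤ (S ∩ Finset.Icc 1 b).card)) := by
  constructor
  · rintro ⟨h0, hj⟩
    constructor
    · exact h0 ▸ nth_mem S 0 (by omega)
    · have h2 : nth S (b-2) ≤ b - 2 + 2 := hj (b-2) (by omega) (by omega)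
      rw [nth_le_iff S _ (by omega) _] at h2
      rw [filter_eq_inter S n _ hS] at h2
      have : b - 2 + 2 = b := by omega
      rw [this] at h2
      omega
  · rintro ⟨h1, hc⟩
    have hub : 1 ∈ S.filter (· ≤ 1) := Finset.mem_filter.mpr ⟨h1, le_rfl⟩
    constructor
    · refine le_antisymm ?_ ?_
      · rw [nth_le_iff S 0 (by omega) 1]
        exact Finset.card_pos.mpr ⟨1, hub⟩
      · exact (Finset.mem_Icc.mp (hS (nth_mem S 0 (by omega)))).1
    · intro j hjb hj1
      rw [nth_le_iff S j (by omega) _, filter_eq_inter S n _ hS]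
      have hsub : Finset.Icc 1 (j+2) ⊆ Finset.Icc 1 b :=
        Finset.Icc_subset_Icc le_rfl (by omega)
      have e1 : (Finset.Icc 1 (j+2) \ S).card + (Finset.Icc 1 (j+2) ∩ S).card
          = (Finset.Icc 1 (j+2)).card := Finset.card_sdiff_add_card_inter _ _
      have e2 : (Finset.Icc 1 b \ S).card + (Finset.Icc 1 b ∩ S).card
          = (Finset.Icc 1 b).card := Finset.card_sdiff_add_card_inter _ _
      have e3 : (Finset.Icc 1 (j+2) \ S).card ≤ (Finset.Icc 1 b \ S).card :=
        Finset.card_le_card (Finset.sdiff_subset_sdiff hsub le_rfl)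
      rw [Nat.card_Icc] at e1 e2
      rw [Finset.inter_comm] at hc
      have e4 : (S ∩ Finset.Icc 1 (j+2)).card = (Finset.Icc 1 (j+2) ∩ S).card := by
        rw [Finset.inter_comm]
      omega

/-- |F({1}∪[3,b])| = (b-1)·C(n-b, k-b+1) + C(n-b, k-b): the number of k-subsets
S of [n] with s₁ = 1 and s_j ≤ j+1 for 2 ≤ j ≤ b-1 (0-based: nth S 0 = 1 and
nth S j ≤ j+2 for 1 ≤ j < b-1). C(n-b, k-b) is written as C(n-b, n-k) (equal
by symmetry, and 0 when b = k+1, matching C(n-b, -1) = 0). -/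
theorem stmt_13 (n k b : ℕ) (hn : 2 * k ≤ n) (hk : 2 ≤ k)
    (hb : 4 ≤ b) (hbk : b ≤ k + 1) :
    ((Finset.Icc 1 n).powerset.filter
      (fun (S : Finset ℕ) => S.card = k ∧ nth S 0 = 1 ∧ ∀ j < b - 1, 1 ≤ j → nth S j ≤ j + 2)).card
    = (b - 1) * Nat.choose (n - b) (k + 1 - b) + Nat.choose (n - b) (n - k) := by
  classical
  have hkn : k ≤ n := by omega
  have hbn : b ≤ n := by omega
  set I : Finset ℕ := Finset.Icc 1 b with hIdef
  have hIcard : I.card = b := by rw [hIdef, Nat.card_Icc]; omega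
  have hIsub : I ⊆ Finset.Icc 1 n := Finset.Icc_subset_Icc le_rfl hbn
  have hrw : (Finset.Icc 1 n).powerset.filter
      (fun (S : Finset ℕ) => S.card = k ∧ nth S 0 = 1 ∧ ∀ j < b - 1, 1 ≤ j → nth S j ≤ j + 2)
      = (Finset.Icc 1 n).powerset.filter
        (fun S => S.card = k ∧ 1 ∈ S ∧ b - 1 ≤ (S ∩ I).card) := by
    apply Finset.filter_congr
    intro S hS
    rw [Finset.mem_powerset] at hS
    constructor
    · rintro ⟨hc, h⟩; exact ⟨hc, (equiv_cond n k b hk hb hbk S hS hc).1 h⟩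
    · rintro ⟨hc, h⟩; exact ⟨hc, (equiv_cond n k b hk hb hbk S hS hc).2 h⟩
  rw [hrw]
  set A : Finset (Finset ℕ) := (Finset.Icc 1 n).powerset.filter
    (fun S => S.card = k ∧ 1 ∈ S ∧ b - 1 ≤ (S ∩ I).card) with hAdef
  have hmemA : ∀ S, S ∈ A ↔ (S ⊆ Finset.Icc 1 n ∧ S.card = k ∧ 1 ∈ S ∧ b - 1 ≤ (S ∩ I).card) := by
    intro S
    rw [hAdef, Finset.mem_filter, Finset.mem_powerset]
  have hsplit : (A.filter (fun S => I ⊆ S)).card + (A.filter (fun S => ¬ I ⊆ S)).card = A.card :=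
    Finset.card_filter_add_card_filter_not _
  -- the "missing one element" part
  have hC : (A.filter (fun S => ¬ I ⊆ S)).card
      = ((Finset.Icc 2 b) ×ˢ (Finset.Icc (b+1) n).powersetCard (k+1-b)).card := by
    refine (Finset.card_bij (fun p _ => (I \ {p.1}) ∪ p.2) ?_ ?_ ?_).symm
    · rintro ⟨m, U⟩ hp
      rw [Finset.mem_product, Finset.mem_Icc, Finset.mem_powersetCard] at hp
      obtain ⟨⟨hm2, hmb⟩, hU, hUcard⟩ := hp
      have hmI : m ∈ I := by rw [hIdef, Finset.mem_Icc]; omega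
      have hUb : ∀ x ∈ U, b + 1 ≤ x ∧ x ≤ n := by
        intro x hx; exact Finset.mem_Icc.mp (hU hx)
      have hdisj : Disjoint (I \ {m}) U := by
        rw [Finset.disjoint_left]
        intro x hx hxU
        have h1 := (Finset.mem_Icc.mp (Finset.mem_sdiff.mp hx).1)
        have h2 := hUb x hxU
        omega
      have hcap : ((I \ {m}) ∪ U) ∩ I = I \ {m} := by
        ext x
        simp only [Finset.mem_inter, Finset.mem_union, Finset.mem_sdiff, hIdef,
          Finset.mem_Icc, Finset.mem_singleton]
        constructor
        · rintro ⟨h1 | h1, h2⟩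
          · exact h1
          · have := hUb x h1; omega
        · intro h; exact ⟨Or.inl h, h.1⟩
      rw [Finset.mem_filter, hmemA]
      have hcardsd : (I \ {m}).card = b - 1 := by
        rw [Finset.card_sdiff_of_subset (by simpa using hmI)]
        simp [hIcard]
      refine ⟨⟨?_, ?_, ?_, ?_⟩, ?_⟩
      · apply Finset.union_subset (Finset.sdiff_subset.trans hIsub)
        intro x hx; have := hUb x hx; rw [Finset.mem_Icc]; omega
      · rw [Finset.card_union_of_disjoint hdisj, hcardsd, hUcard]; omega
      · apply Finset.mem_union_left
        rw [Finset.mem_sdiff, Finset.mem_singleton]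
        constructor
        · rw [hIdef, Finset.mem_Icc]; omega
        · omega
      · rw [hcap, hcardsd]
      · intro hsub
        have : m ∈ (I \ {m}) ∪ U := hsub hmI
        rw [Finset.mem_union, Finset.mem_sdiff, Finset.mem_singleton] at this
        rcases this with ⟨_, h⟩ | h
        · exact h rfl
        · have := hUb m h; omega
    · rintro ⟨m1, U1⟩ hp1 ⟨m2, U2⟩ hp2 heq
      rw [Finset.mem_product, Finset.mem_Icc, Finset.mem_powersetCard] at hp1 hp2
      obtain ⟨⟨hm12, hm1b⟩, hU1, _⟩ := hp1
      obtain ⟨⟨hm22, hm2b⟩, hU2, _⟩ := hp2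
      have key : ∀ (m : ℕ), 2 ≤ m → m ≤ b → ∀ U : Finset ℕ, U ⊆ Finset.Icc (b+1) n →
          (((I \ {m}) ∪ U) ∩ I = I \ {m}) ∧ (((I \ {m}) ∪ U) \ I = U) := by
        intro m hm2 hmb U hU
        constructor
        · ext x
          simp only [Finset.mem_inter, Finset.mem_union, Finset.mem_sdiff, hIdef,
            Finset.mem_Icc, Finset.mem_singleton]
          constructor
          · rintro ⟨h1 | h1, h2⟩
            · exact h1
            · have := Finset.mem_Icc.mp (hU h1); omega
          · intro h; exact ⟨Or.inl h, h.1⟩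
        · ext x
          simp only [Finset.mem_union, Finset.mem_sdiff, hIdef, Finset.mem_Icc,
            Finset.mem_singleton]
          constructor
          · rintro ⟨h1 | h1, h2⟩
            · omega
            · exact h1
          · intro h
            have := Finset.mem_Icc.mp (hU h)
            exact ⟨Or.inr h, by omega⟩
      obtain ⟨hc1, hd1⟩ := key m1 hm12 hm1b U1 hU1
      obtain ⟨hc2, hd2⟩ := key m2 hm22 hm2b U2 hU2
      have heq' : I \ {m1} ∪ U1 = I \ {m2} ∪ U2 := heq
      have hIeq : I \ {m1} = I \ {m2} := by rw [← hc1, ← hc2, heq']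
      have hU : U1 = U2 := by rw [← hd1, ← hd2, heq']
      have hm : m1 = m2 := by
        by_contra hne
        have hm2I : m2 ∈ I := by rw [hIdef, Finset.mem_Icc]; omega
        have : m2 ∈ I \ {m1} := by
          rw [Finset.mem_sdiff, Finset.mem_singleton]
          exact ⟨hm2I, fun h => hne h.symm⟩
        rw [hIeq, Finset.mem_sdiff, Finset.mem_singleton] at this
        exact this.2 rfl
      simp [hm, hU]
    · intro S hS
      rw [Finset.mem_filter, hmemA] at hS
      obtain ⟨⟨hSsub, hScard, h1S, hcI⟩, hnsub⟩ := hS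
      obtain ⟨x, hxI, hxS⟩ := Finset.not_subset.mp hnsub
      have hle : (S ∩ I).card ≤ b - 1 := by
        have hsub : S ∩ I ⊆ I.erase x := by
          intro y hy
          rw [Finset.mem_inter] at hy
          rw [Finset.mem_erase]
          exact ⟨fun h => hxS (h ▸ hy.1), hy.2⟩
        calc (S ∩ I).card ≤ (I.erase x).card := Finset.card_le_card hsub
          _ = b - 1 := by rw [Finset.card_erase_of_mem hxI, hIcard]
      have hceq : (S ∩ I).card = b - 1 := le_antisymm hle hcI
      have hIS : (I \ S).card = 1 := by
        have e1 : (I \ S).card + (I ∩ S).card = I.card := Finset.card_sdiff_add_card_inter _ _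
        rw [Finset.inter_comm] at e1
        rw [hIcard, hceq] at e1
        omega
      obtain ⟨m, hm⟩ := Finset.card_eq_one.mp hIS
      have hmI : m ∈ I ∧ m ∉ S := by
        have : m ∈ I \ S := hm ▸ Finset.mem_singleton_self m
        exact Finset.mem_sdiff.mp this
      have hm2 : 2 ≤ m := by
        have hmb := Finset.mem_Icc.mp (hIdef ▸ hmI.1)
        rcases Nat.lt_or_ge m 2 with h | h
        · exfalso; have : m = 1 := by omega
          exact hmI.2 (this ▸ h1S)
        · exact h
      have hmb : m ≤ b := (Finset.mem_Icc.mp (hIdef ▸ hmI.1)).2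
      refine ⟨⟨m, S \ I⟩, ?_, ?_⟩
      · rw [Finset.mem_product, Finset.mem_Icc, Finset.mem_powersetCard]
        refine ⟨⟨hm2, hmb⟩, ?_, ?_⟩
        · intro y hy
          rw [Finset.mem_sdiff] at hy
          have h1 := Finset.mem_Icc.mp (hSsub hy.1)
          have h2 : ¬ (1 ≤ y ∧ y ≤ b) := fun h => hy.2 (by rw [hIdef, Finset.mem_Icc]; exact h)
          rw [Finset.mem_Icc]; omega
        · have e1 : (S \ I).card + (S ∩ I).card = S.card := Finset.card_sdiff_add_card_inter _ _
          rw [hScard, hceq] at e1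
          show (S \ I).card = k + 1 - b
          omega
      · have hint : I \ {m} = S ∩ I := by
          rw [← hm]
          ext y
          simp only [Finset.mem_sdiff, Finset.mem_inter]
          tauto
        show I \ {m} ∪ (S \ I) = S
        rw [hint]
        ext y
        simp only [Finset.mem_union, Finset.mem_inter, Finset.mem_sdiff]
        tauto
  -- the "all of I" part
  have hB : (A.filter (fun S => I ⊆ S)).card = Nat.choose (n - b) (n - k) := by
    by_cases hbk2 : b ≤ k
    · have hchoose : Nat.choose (n - b) (n - k) = Nat.choose (n - b) (k - b) := by
        have h1 : n - k = (n - b) - (k - b) := by omega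
        rw [h1, Nat.choose_symm (by omega)]
      rw [hchoose]
      have : (A.filter (fun S => I ⊆ S)).card
          = ((Finset.Icc (b+1) n).powersetCard (k-b)).card := by
        refine (Finset.card_bij (fun U _ => I ∪ U) ?_ ?_ ?_).symm
        · intro U hU
          rw [Finset.mem_powersetCard] at hU
          obtain ⟨hUsub, hUcard⟩ := hU
          have hUb : ∀ x ∈ U, b + 1 ≤ x ∧ x ≤ n := by
            intro x hx; exact Finset.mem_Icc.mp (hUsub hx)
          have hdisj : Disjoint I U := by
            rw [Finset.disjoint_left]
            intro x hx hxU
            have h1 := Finset.mem_Icc.mp (hIdef ▸ hx)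
            have h2 := hUb x hxU
            omega
          rw [Finset.mem_filter, hmemA]
          refine ⟨⟨?_, ?_, ?_, ?_⟩, Finset.subset_union_left⟩
          · apply Finset.union_subset hIsub
            intro x hx; have := hUb x hx; rw [Finset.mem_Icc]; omega
          · rw [Finset.card_union_of_disjoint hdisj, hIcard, hUcard]; omega
          · exact Finset.mem_union_left _ (by rw [hIdef, Finset.mem_Icc]; omega)
          · have hsub2 : I ⊆ (I ∪ U) ∩ I := Finset.subset_inter Finset.subset_union_left le_rfl
            have hcle := Finset.card_le_card hsub2
            have hfin : b - 1 ≤ ((I ∪ U) ∩ I).card := by omega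
            exact hfin
        · intro U1 hU1 U2 hU2 heq
          rw [Finset.mem_powersetCard] at hU1 hU2
          have key : ∀ U : Finset ℕ, U ⊆ Finset.Icc (b+1) n → (I ∪ U) \ I = U := by
            intro U hU
            ext x
            simp only [Finset.mem_union, Finset.mem_sdiff, hIdef, Finset.mem_Icc]
            constructor
            · rintro ⟨h1 | h1, h2⟩
              · omega
              · exact h1
            · intro h
              have := Finset.mem_Icc.mp (hU h)
              exact ⟨Or.inr h, by omega⟩
          have heq' : I ∪ U1 = I ∪ U2 := heq
          rw [← key U1 hU1.1, ← key U2 hU2.1, heq']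
        · intro S hS
          rw [Finset.mem_filter, hmemA] at hS
          obtain ⟨⟨hSsub, hScard, _, _⟩, hsub⟩ := hS
          refine ⟨S \ I, ?_, Finset.union_sdiff_of_subset hsub⟩
          rw [Finset.mem_powersetCard]
          constructor
          · intro y hy
            rw [Finset.mem_sdiff] at hy
            have h1 := Finset.mem_Icc.mp (hSsub hy.1)
            have h2 : ¬ (1 ≤ y ∧ y ≤ b) := fun h => hy.2 (by rw [hIdef, Finset.mem_Icc]; exact h)
            rw [Finset.mem_Icc]; omega
          · rw [Finset.card_sdiff_of_subset hsub, hScard, hIcard]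
      rw [this, Finset.card_powersetCard, Nat.card_Icc]
      congr 1
      omega
    · have hempty : A.filter (fun S => I ⊆ S) = ∅ := by
        rw [Finset.filter_eq_empty_iff]
        intro S hS hsub
        rw [hmemA] at hS
        have := Finset.card_le_card hsub
        rw [hIcard, hS.2.1] at this
        omega
      rw [hempty]
      have : n - b < n - k := by omega
      rw [Nat.choose_eq_zero_of_lt this]
      simp
  rw [hC, Finset.card_product, Finset.card_powersetCard, Nat.card_Icc, Nat.card_Icc] at hsplit
  have hIcc2 : b + 1 - 2 = b - 1 := by omega
  rw [hIcc2] at hsplit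
  have hIcc3 : n + 1 - (b + 1) = n - b := by omega
  rw [hIcc3] at hsplit
  omega
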